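/- For every integer k ≥ 2, there exists N(k) ∈ ℕ such that for all m > N(k), every complex root z of z^{m+k} + z^m - 1 satisfies Re(z) < 1; hence K_{m,m+k} is stable for all m > N(k). -/

import Mathlib

set_option maxHeartbeats 1000000


theorem Kmmk_eventually_stable (k : ℕ) (hk : 2 ≤ k) :
    ∃ N : ℕ, ∀ m : ℕ, N < m →
      (∀ z : ℂ, z ^ (m + k) + z ^ m - 1 = 0 → z.re < 1) ∧
      (∀ x : ℂ, (1 + x) ^ (m + k) + (1 + x) ^ m - 1 = 0 → x.re ≤ 0) := by
  set δ : ℝ := 1 / (k * 2 ^ (k - 1)) with hδdef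
  have hkR : (2:ℝ) ≤ k := by exact_mod_cast hk
  have hden : (1:ℝ) ≤ k * 2 ^ (k - 1) := by
    have h1 : (1:ℝ) ≤ (2:ℝ) ^ (k-1) := one_le_pow₀ (by norm_num)
    nlinarith
  have hδpos : 0 < δ := by
    rw [hδdef]; positivity
  have hδ1 : δ ≤ 1 := by
    rw [hδdef, div_le_one (by linarith)]; linarith
  have hδeq : δ * (k * 2 ^ (k - 1)) = 1 := by
    rw [hδdef]; field_simp
  set c : ℝ := Real.sqrt (1 + δ^2) with hcdef
  have hc0 : 0 < c := Real.sqrt_pos.mpr (by nlinarith)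
  have hc2 : c ^ 2 = 1 + δ ^ 2 := Real.sq_sqrt (by nlinarith)
  have hc1 : 1 < c := by nlinarith
  have hck : 1 < c ^ k := one_lt_pow₀ hc1 (by omega)
  obtain ⟨N, hN⟩ := pow_unbounded_of_one_lt (1/(c^k - 1)) hc1
  refine ⟨N, fun m hm => ?_⟩
  have hm1 : m ≠ 0 := by omega
  have key : ∀ z : ℂ, z ^ (m + k) + z ^ m - 1 = 0 → z.re < 1 := by
    intro z hz
    by_contra hre
    push_neg at hre
    have hz1 : z ≠ 1 := by
      rintro rfl; simp at hz
    have heq : z ^ m * (z ^ k + 1) = 1 := by linear_combination hz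
    have habs : ‖z‖ ^ m * ‖(z ^ k + 1)‖ = 1 := by
      have := congrArg (‖·‖) heq
      simpa [norm_mul, norm_pow] using this
    have hnsq : ‖z‖ ^ 2 = z.re ^ 2 + z.im ^ 2 := by
      rw [Complex.sq_norm, Complex.normSq_apply]; ring
    have hzabs1 : 1 < ‖z‖ := by
      have habs0 : 0 ≤ ‖z‖ := norm_nonneg z
      rcases eq_or_ne z.im 0 with him | him
      · have hre1 : z.re ≠ 1 := by
          intro h
          apply hz1
          apply Complex.ext <;> simp [h, him]
        have : 1 < z.re := lt_of_le_of_ne hre (Ne.symm hre1)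
        nlinarith
      · have : 0 < z.im ^ 2 := by positivity
        nlinarith
    by_cases hd : ‖(z - 1)‖ ≤ δ
    · -- z close to 1 : |z^k + 1| ≥ 1, |z|^m > 1, contradiction
      have hzle : ‖z‖ ≤ 1 + δ := by
        calc ‖z‖ = ‖((z - 1) + 1)‖ := by ring_nf
        _ ≤ ‖(z - 1)‖ + 1 := by
            simpa using norm_add_le (z-1) 1
        _ ≤ 1 + δ := by linarith
      have hgeom : z ^ k - 1 = (∑ i ∈ Finset.range k, z ^ i) * (z - 1) :=
        (geom_sum_mul z k).symm
      have hsum : ‖(∑ i ∈ Finset.range k, z ^ i)‖ ≤ k * 2 ^ (k-1) := by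
        calc ‖(∑ i ∈ Finset.range k, z ^ i)‖
            ≤ ∑ i ∈ Finset.range k, ‖(z ^ i)‖ :=
              norm_sum_le _ _
        _ ≤ ∑ i ∈ Finset.range k, (2:ℝ) ^ (k-1) := by
            apply Finset.sum_le_sum
            intro i hi
            rw [norm_pow]
            calc ‖z‖ ^ i ≤ (1 + δ) ^ i :=
                  pow_le_pow_left₀ (norm_nonneg z) hzle i
            _ ≤ (2:ℝ) ^ i := pow_le_pow_left₀ (by linarith) (by linarith) i
            _ ≤ (2:ℝ) ^ (k-1) := by
                apply pow_le_pow_right₀ (by norm_num)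
                have := Finset.mem_range.mp hi
                omega
        _ = k * 2 ^ (k-1) := by
            rw [Finset.sum_const, Finset.card_range]; simp
      have hzk1 : ‖(z ^ k - 1)‖ ≤ 1 := by
        rw [hgeom, norm_mul]
        calc ‖(∑ i ∈ Finset.range k, z ^ i)‖ * ‖(z - 1)‖
            ≤ (k * 2 ^ (k-1)) * δ := by
              apply mul_le_mul hsum hd (norm_nonneg _)
              positivity
        _ = 1 := by linarith [hδeq]
      have hlow : 1 ≤ ‖(z ^ k + 1)‖ := by
        have h2 : (2:ℂ) = (z ^ k + 1) + -(z ^ k - 1) := by ring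
        have h3 : ‖(2:ℂ)‖ ≤ ‖(z ^ k + 1)‖ + ‖(z ^ k - 1)‖ := by
          rw [h2]
          have h5 : ‖(1 - z ^ k)‖ = ‖(z ^ k - 1)‖ :=
            norm_sub_rev 1 (z ^ k)
          simpa [h5] using norm_add_le (z ^ k + 1) (-(z ^ k - 1))
        have h4 : ‖(2:ℂ)‖ = 2 := by simp
        rw [h4] at h3
        linarith
      have hpowm : 1 < ‖z‖ ^ m := one_lt_pow₀ hzabs1 hm1
      nlinarith
    · -- z far from 1 : |z| > c
      push_neg at hd
      have hsub : ‖(z - 1)‖ ^ 2 = (z.re - 1) ^ 2 + z.im ^ 2 := by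
        rw [Complex.sq_norm, Complex.normSq_apply]
        simp [Complex.sub_re, Complex.sub_im]
        ring
      have hzc : c < ‖z‖ := by
        have h1 : c ^ 2 < ‖z‖ ^ 2 := by
          rw [hc2, hnsq]
          nlinarith
        nlinarith [norm_nonneg z]
      have hlow : c ^ k - 1 < ‖(z ^ k + 1)‖ := by
        have h1 : ‖z‖ ^ k ≤ ‖(z ^ k + 1)‖ + 1 := by
          have := norm_add_le (z ^ k + 1) (-1)
          simpa [map_pow] using this
        have h2 : c ^ k < ‖z‖ ^ k :=
          pow_lt_pow_left₀ hzc hc0.le (by omega)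
        linarith
      have hpow : c ^ m < ‖z‖ ^ m :=
        pow_lt_pow_left₀ hzc hc0.le hm1
      have hcm : c ^ N ≤ c ^ m := pow_le_pow_right₀ hc1.le hm.le
      have hNbig : 1 < c ^ N * (c ^ k - 1) := by
        rw [div_lt_iff₀ (by linarith)] at hN
        linarith
      have hcm0 : 0 < c ^ m := pow_pos hc0 m
      have : c ^ m * (c ^ k - 1) < 1 := by
        calc c ^ m * (c ^ k - 1) < ‖z‖ ^ m * ‖(z ^ k + 1)‖ := by
              apply mul_lt_mul' hpow.le hlow (by linarith) (pow_pos (by linarith) m)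
        _ = 1 := habs
      nlinarith
  refine ⟨key, fun x hx => ?_⟩
  have := key (1 + x) hx
  have hre : (1 + x).re = 1 + x.re := by simp
  linarith [this, hre ▸ this]
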